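/- Balanced dynamics on the projective plane (Lemma 2.9, diagonal case): Let a_n = diag(1, β_n, γ_n) ∈ GL(3,ℝ) with 0 < γ_n ≤ β_n ≤ 1 for all n, β_n → 0 and γ_n/β_n → 0, acting on ℝP². Then: (1) for every p = [x:y:z] ∈ ℝP² with x ≠ 0, D_{(a_n)}(p) = {[e₁]}; (2) for every p = [0:y:z] with y ≠ 0, D_{(a_n)}(p) equals the projective line {[s:t:0] : (s,t) ≠ (0,0)} spanned by [e₁] and [e₂]; (3) D_{(a_n)}([e₃]) = ℝP². -/

import Mathlib

open Matrix Filter Topology Set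

noncomputable section

/-- `V3` is `ℝ³`. -/
abbrev V3 : Type := Fin 3 → ℝ

/-- The group `GL(3,ℝ)` of invertible `3 × 3` real matrices. -/
abbrev GL3 : Type := (Matrix (Fin 3) (Fin 3) ℝ)ˣ

/-- Nonzero vectors of `ℝ³` up to a nonzero scalar. -/
def projSetoid : Setoid {v : V3 // v ≠ 0} where
  r v w := ∃ c : ℝ, c ≠ 0 ∧ w.1 = c • v.1
  iseqv := by
    refine ⟨fun v => ⟨1, one_ne_zero, (one_smul ℝ v.1).symm⟩, ?_, ?_⟩
    · rintro v w ⟨c, hc, h⟩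
      exact ⟨c⁻¹, inv_ne_zero hc, by rw [h, smul_smul, inv_mul_cancel₀ hc, one_smul]⟩
    · rintro u v w ⟨c, hc, h⟩ ⟨d, hd, h'⟩
      exact ⟨d * c, mul_ne_zero hd hc, by rw [h', h, smul_smul]⟩

/-- The real projective plane `ℝP²`, as the quotient of `ℝ³ \ {0}` by nonzero scalings,
with the quotient topology.  (We use the same model for the dual projective plane `ℝP²*`,
a class `[f₁ : f₂ : f₃]*` of linear forms being recorded through its coefficient
vector `(f₁, f₂, f₃)`; the form acts on vectors by the dot product.) -/
def RP2 : Type := Quotient projSetoid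

/-- The projective class `[v]` of a nonzero vector. -/
def RP2.mk (v : V3) (hv : v ≠ 0) : RP2 := Quotient.mk projSetoid ⟨v, hv⟩

instance : TopologicalSpace RP2 :=
  inferInstanceAs (TopologicalSpace (Quotient projSetoid))

lemma RP2.ind {P : RP2 → Prop} (h : ∀ (v : V3) (hv : v ≠ 0), P (RP2.mk v hv)) (p : RP2) : P p := by
  refine Quotient.ind (fun a => ?_) p
  exact h a.1 a.2

lemma RP2.mk_eq_mk_iff {v w : V3} {hv : v ≠ 0} {hw : w ≠ 0} :
    RP2.mk v hv = RP2.mk w hw ↔ ∃ c : ℝ, c ≠ 0 ∧ w = c • v :=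
  ⟨fun h => Quotient.exact h, fun h => Quotient.sound h⟩

lemma ne_zero_of_coord {v : V3} (i : Fin 3) (h : v i ≠ 0) : v ≠ 0 :=
  fun h0 => h (by rw [h0]; rfl)

/-- The projective class of a vector, defaulting to `[e₁]` for the zero vector. -/
def RP2.mk' (v : V3) : RP2 :=
  if h : v = 0 then RP2.mk ![1, 0, 0] (ne_zero_of_coord 0 (by simp)) else RP2.mk v h

lemma e1_ne : (![1, 0, 0] : V3) ≠ 0 := ne_zero_of_coord 0 (by norm_num)

lemma e3_ne : (![0, 0, 1] : V3) ≠ 0 := ne_zero_of_coord 2 (by simp)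

lemma GL3.mulVec_ne {g : GL3} {v : V3} (hv : v ≠ 0) :
    (g : Matrix (Fin 3) (Fin 3) ℝ) *ᵥ v ≠ 0 := by
  intro h
  apply hv
  have h2 : ((g⁻¹ : GL3) : Matrix (Fin 3) (Fin 3) ℝ) *ᵥ
      ((g : Matrix (Fin 3) (Fin 3) ℝ) *ᵥ v) = 0 := by rw [h, Matrix.mulVec_zero]
  rwa [Matrix.mulVec_mulVec, Units.inv_mul, Matrix.one_mulVec] at h2

/-- The action of `g ∈ GL(3,ℝ)` on `ℝP²`, `g · [v] = [g v]`. -/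
def RP2.mapMat (g : GL3) : RP2 → RP2 :=
  Quotient.lift
    (fun a : {v : V3 // v ≠ 0} =>
      RP2.mk ((g : Matrix (Fin 3) (Fin 3) ℝ) *ᵥ a.1) (GL3.mulVec_ne a.2))
    (by
      rintro a b ⟨c, hc, h⟩
      apply Quotient.sound
      refine ⟨c, hc, ?_⟩
      show (g : Matrix (Fin 3) (Fin 3) ℝ) *ᵥ b.1 = c • ((g : Matrix (Fin 3) (Fin 3) ℝ) *ᵥ a.1)
      rw [h, Matrix.mulVec_smul])

lemma RP2.mapMat_mk (g : GL3) (v : V3) (hv : v ≠ 0) :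
    RP2.mapMat g (RP2.mk v hv) =
      RP2.mk ((g : Matrix (Fin 3) (Fin 3) ℝ) *ᵥ v) (GL3.mulVec_ne hv) := rfl

/-- The element of `GL(3,ℝ)` acting on coefficient vectors of linear forms the way `g`
acts on `ℝP²*`:  the coefficient vector of `f ∘ g⁻¹` is `(g⁻¹)ᵀ` applied to that of `f`. -/
def dualGL (g : GL3) : GL3 where
  val := ((g⁻¹ : GL3) : Matrix (Fin 3) (Fin 3) ℝ)ᵀ
  inv := ((g : GL3) : Matrix (Fin 3) (Fin 3) ℝ)ᵀ
  val_inv := by rw [← Matrix.transpose_mul, Units.mul_inv, Matrix.transpose_one]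
  inv_val := by rw [← Matrix.transpose_mul, Units.inv_mul, Matrix.transpose_one]

/-- The flag space `X`: pairs `([v], [f]) ∈ ℝP² × ℝP²*` with `f(v) = 0`. -/
def FlagSpace : Set (RP2 × RP2) :=
  {x | ∀ (v f : V3) (hv : v ≠ 0) (hf : f ≠ 0),
    x.1 = RP2.mk v hv → x.2 = RP2.mk f hf → f ⬝ᵥ v = 0}

/-- Points of the flag space. -/
abbrev Flag3 : Type := ↥FlagSpace

lemma mem_flagSpace_mk {v f : V3} (hv : v ≠ 0) (hf : f ≠ 0) (h : f ⬝ᵥ v = 0) :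
    (RP2.mk v hv, RP2.mk f hf) ∈ FlagSpace := by
  rintro v' f' hv' hf' hp hq
  obtain ⟨c, hc, hcv⟩ := RP2.mk_eq_mk_iff.1 hp
  obtain ⟨d, hd, hdf⟩ := RP2.mk_eq_mk_iff.1 hq
  rw [hcv, hdf, smul_dotProduct, dotProduct_smul, h]
  simp

lemma dot_invariance (g : GL3) (v f : V3) :
    (((dualGL g : GL3) : Matrix (Fin 3) (Fin 3) ℝ) *ᵥ f) ⬝ᵥ
      ((g : Matrix (Fin 3) (Fin 3) ℝ) *ᵥ v) = f ⬝ᵥ v := by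
  have h1 : ((dualGL g : GL3) : Matrix (Fin 3) (Fin 3) ℝ) *ᵥ f =
      f ᵥ* ((g⁻¹ : GL3) : Matrix (Fin 3) (Fin 3) ℝ) := Matrix.mulVec_transpose _ _
  rw [h1, dotProduct_mulVec, Matrix.vecMul_vecMul, Units.inv_mul, Matrix.vecMul_one]

lemma flagPair_mem (g : GL3) {x : RP2 × RP2} (hx : x ∈ FlagSpace) :
    (RP2.mapMat g x.1, RP2.mapMat (dualGL g) x.2) ∈ FlagSpace := by
  obtain ⟨p, q⟩ := x
  revert hx
  refine Quotient.inductionOn₂ p q ?_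
  rintro ⟨v, hv⟩ ⟨f, hf⟩ hx
  have h0 : f ⬝ᵥ v = 0 := hx v f hv hf rfl rfl
  exact mem_flagSpace_mk _ _ (by rw [dot_invariance]; exact h0)

/-- The action of `g ∈ GL(3,ℝ)` on the flag space,
`g · ([v], [f]) = ([g v], [f ∘ g⁻¹])`. -/
def flagMap (g : GL3) (x : Flag3) : Flag3 :=
  ⟨(RP2.mapMat g x.1.1, RP2.mapMat (dualGL g) x.1.2), flagPair_mem g x.2⟩

/-! ### Composition laws and continuity -/

lemma RP2.mapMat_mapMat (g h : GL3) (p : RP2) :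
    RP2.mapMat g (RP2.mapMat h p) = RP2.mapMat (g * h) p := by
  refine Quotient.inductionOn p fun a => ?_
  apply Quotient.sound
  exact ⟨1, one_ne_zero, by simp [Matrix.mulVec_mulVec, Units.val_mul]⟩

lemma RP2.mapMat_one (p : RP2) : RP2.mapMat 1 p = p := by
  refine Quotient.inductionOn p fun a => ?_
  apply Quotient.sound
  exact ⟨1, one_ne_zero, by simp [Matrix.one_mulVec, Units.val_one]⟩

lemma dualGL_mul (g h : GL3) : dualGL (g * h) = dualGL g * dualGL h := by
  apply Units.ext
  rw [Units.val_mul]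
  show (((g * h)⁻¹ : GL3) : Matrix (Fin 3) (Fin 3) ℝ)ᵀ =
    ((g⁻¹ : GL3) : Matrix (Fin 3) (Fin 3) ℝ)ᵀ * ((h⁻¹ : GL3) : Matrix (Fin 3) (Fin 3) ℝ)ᵀ
  rw [_root_.mul_inv_rev, Units.val_mul, Matrix.transpose_mul]

lemma dualGL_one : dualGL (1 : GL3) = 1 := by
  apply Units.ext
  show (((1 : GL3)⁻¹ : GL3) : Matrix (Fin 3) (Fin 3) ℝ)ᵀ = ((1 : GL3) : Matrix (Fin 3) (Fin 3) ℝ)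
  rw [inv_one, Units.val_one, Matrix.transpose_one]

lemma flagMap_flagMap (g h : GL3) (x : Flag3) :
    flagMap g (flagMap h x) = flagMap (g * h) x := by
  apply Subtype.ext
  apply Prod.ext
  · exact RP2.mapMat_mapMat g h x.1.1
  · show RP2.mapMat (dualGL g) (RP2.mapMat (dualGL h) x.1.2) = RP2.mapMat (dualGL (g * h)) x.1.2
    rw [RP2.mapMat_mapMat, dualGL_mul]

lemma flagMap_one (x : Flag3) : flagMap 1 x = x := by
  apply Subtype.ext
  apply Prod.ext
  · exact RP2.mapMat_one x.1.1
  · show RP2.mapMat (dualGL 1) x.1.2 = x.1.2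
    rw [dualGL_one, RP2.mapMat_one]

lemma continuous_mulVec (M : Matrix (Fin 3) (Fin 3) ℝ) :
    Continuous fun v : V3 => M *ᵥ v := by
  have h : (fun v : V3 => M *ᵥ v) = fun v => fun i => ∑ j, M i j * v j := by
    funext v i
    simp [Matrix.mulVec, dotProduct]
  rw [h]
  exact continuous_pi fun i =>
    continuous_finsetSum _ fun j _ => continuous_const.mul (continuous_apply j)

lemma continuous_mapMat (g : GL3) : Continuous (RP2.mapMat g) := by
  apply Continuous.quotient_lift
  exact continuous_quotient_mk'.comp
    (Continuous.subtype_mk ((continuous_mulVec _).comp continuous_subtype_val) _)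

lemma continuous_flagMap (g : GL3) : Continuous (flagMap g) := by
  apply Continuous.subtype_mk
  exact ((continuous_mapMat g).comp (continuous_fst.comp continuous_subtype_val)).prodMk
    ((continuous_mapMat (dualGL g)).comp (continuous_snd.comp continuous_subtype_val))

/-- The action of `g ∈ GL(3,ℝ)` on the flag space, as a homeomorphism. -/
def flagHomeo (g : GL3) : Flag3 ≃ₜ Flag3 where
  toFun := flagMap g
  invFun := flagMap g⁻¹
  left_inv := fun x => by rw [flagMap_flagMap, inv_mul_cancel, flagMap_one]
  right_inv := fun x => by rw [flagMap_flagMap, mul_inv_cancel, flagMap_one]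
  continuous_toFun := continuous_flagMap g
  continuous_invFun := continuous_flagMap g⁻¹

/-- The group of homeomorphisms of a topological space
(with `(f * g) x = f (g x)`). -/
instance homeoGroup (Z : Type*) [TopologicalSpace Z] : Group (Z ≃ₜ Z) where
  mul f g := g.trans f
  one := Homeomorph.refl Z
  inv := Homeomorph.symm
  mul_assoc _ _ _ := Homeomorph.ext fun _ => rfl
  one_mul _ := Homeomorph.ext fun _ => rfl
  mul_one _ := Homeomorph.ext fun _ => rfl
  inv_mul_cancel f := Homeomorph.ext fun x => f.symm_apply_apply x

/-! ### Geometric objects in the flag space -/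

/-- The α-circle of a point `p ∈ ℝP²`: all flags whose point is `p`. -/
def Cα (p : RP2) : Set Flag3 := {x | x.1.1 = p}

/-- The β-circle of the projective line with defining form (class) `q`:
all flags whose plane is `ker q`. -/
def Cβ (q : RP2) : Set Flag3 := {x | x.1.2 = q}

/-- The plane of the flag `x` contains the direction of the vector `u`. -/
def planeContains (x : Flag3) (u : V3) : Prop :=
  ∀ (f : V3) (hf : f ≠ 0), x.1.2 = RP2.mk f hf → f ⬝ᵥ u = 0

/-- The point of the flag `x` lies on the projective line defined by the linear
form of coefficients `w`. -/
def pointOnForm (x : Flag3) (w : V3) : Prop :=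
  ∀ (v : V3) (hv : v ≠ 0), x.1.1 = RP2.mk v hv → w ⬝ᵥ v = 0

/-- The β-circle of the projective line spanned by the (independent) directions of
`u` and `w`: all flags whose plane contains both. -/
def CβSpan (u w : V3) : Set Flag3 := {x | planeContains x u ∧ planeContains x w}

lemma li_ne_zero_0 {v1 v2 v3 : V3} (h : LinearIndependent ℝ ![v1, v2, v3]) : v1 ≠ 0 := by
  have := h.ne_zero 0; simpa using this

lemma li_ne_zero_1 {v1 v2 v3 : V3} (h : LinearIndependent ℝ ![v1, v2, v3]) : v2 ≠ 0 := by
  have := h.ne_zero 1; simpa using this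

lemma li_ne_zero_2 {v1 v2 v3 : V3} (h : LinearIndependent ℝ ![v1, v2, v3]) : v3 ≠ 0 := by
  have := h.ne_zero 2; simpa using this

/-- The repulsive bouquet of circles `B⁻(g) = C_α([v₃]) ∪ C_β(span(v₂,v₃))` of a
loxodromic element with eigenvectors `v₁, v₂, v₃` (eigenvalues in decreasing order
of modulus). -/
def bouquetMinus (v2 v3 : V3) (h3 : v3 ≠ 0) : Set Flag3 :=
  Cα (RP2.mk v3 h3) ∪ CβSpan v2 v3

/-- The attractive bouquet of circles `B⁺(g) = C_α([v₁]) ∪ C_β(span(v₁,v₂))`. -/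
def bouquetPlus (v1 v2 : V3) (h1 : v1 ≠ 0) : Set Flag3 :=
  Cα (RP2.mk v1 h1) ∪ CβSpan v1 v2

/-- The dynamic set of a point `x` under a sequence of maps `g n`: all limits of
`g (n k) (x k)` for a strictly increasing sequence `(n k)` and a sequence `x k → x`. -/
def DynSet {M : Type*} [TopologicalSpace M] (g : ℕ → M → M) (x : M) : Set M :=
  {y | ∃ φ : ℕ → ℕ, StrictMono φ ∧ ∃ u : ℕ → M,
    Tendsto u atTop (𝓝 x) ∧ Tendsto (fun k => g (φ k) (u k)) atTop (𝓝 y)}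

end

noncomputable section Aux
open Matrix Filter Topology Set

def Qd (v : V3) : ℝ := v ⬝ᵥ v

lemma Qd_eq (v : V3) : Qd v = ∑ j, v j * v j := rfl

lemma Qd_nonneg (v : V3) : 0 ≤ Qd v := by
  rw [Qd_eq]; exact Finset.sum_nonneg fun _ _ => mul_self_nonneg _

lemma Qd_pos {v : V3} (hv : v ≠ 0) : 0 < Qd v := by
  obtain ⟨i, hi⟩ := Function.ne_iff.1 hv
  exact Finset.sum_pos' (fun j _ => mul_self_nonneg _) ⟨i, Finset.mem_univ i, mul_self_pos.2 hi⟩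

/-- The Veronese-type map `v ↦ v vᵀ / |v|²`. -/
def Psi (v : V3) : Matrix (Fin 3) (Fin 3) ℝ := (Qd v)⁻¹ • Matrix.of fun i j => v i * v j

lemma Psi_apply (v : V3) (i j : Fin 3) : Psi v i j = (Qd v)⁻¹ * (v i * v j) := rfl

lemma Psi_smul {c : ℝ} (hc : c ≠ 0) (v : V3) : Psi (c • v) = Psi v := by
  have hq : Qd (c • v) = c ^ 2 * Qd v := by
    rw [Qd_eq, Qd_eq, Finset.mul_sum]
    refine Finset.sum_congr rfl fun j _ => ?_
    show c * v j * (c * v j) = _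
    ring
  funext i j
  show (Qd (c • v))⁻¹ * ((c • v) i * (c • v) j) = (Qd v)⁻¹ * (v i * v j)
  have h1 : (c • v) i = c * v i := rfl
  have h2 : (c • v) j = c * v j := rfl
  rw [hq, h1, h2]
  rcases eq_or_ne (Qd v) 0 with h | h
  · simp [h]
  · field_simp

/-- `Phi [v] = Psi v`, a continuous injection of `ℝP²` into the matrix space. -/
def Phi : RP2 → Matrix (Fin 3) (Fin 3) ℝ :=
  Quotient.lift (fun a : {v : V3 // v ≠ 0} => Psi a.1) (by
    rintro a b ⟨c, hc, h⟩
    show Psi a.1 = Psi b.1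
    rw [h, Psi_smul hc])

lemma Phi_mk (v : V3) (hv : v ≠ 0) : Phi (RP2.mk v hv) = Psi v := rfl

lemma continuous_Qd : Continuous Qd := by
  have : Qd = fun v : V3 => ∑ j, v j * v j := rfl
  rw [this]
  exact continuous_finset_sum _ fun j _ => (continuous_apply j).mul (continuous_apply j)

lemma continuous_entries :
    Continuous fun v : V3 => (Matrix.of fun i j => v i * v j : Matrix (Fin 3) (Fin 3) ℝ) := by
  refine continuous_pi fun i => continuous_pi fun j => ?_
  exact (continuous_apply i).mul (continuous_apply j)

lemma continuousAt_Psi {v : V3} (hv : v ≠ 0) : ContinuousAt Psi v :=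
  (continuous_Qd.continuousAt.inv₀ (Qd_pos hv).ne').smul continuous_entries.continuousAt

lemma continuous_Phi : Continuous Phi := by
  apply Continuous.quotient_lift
  exact continuous_iff_continuousAt.2 fun a =>
    (continuousAt_Psi a.2).comp continuous_subtype_val.continuousAt

lemma Psi_mulVec (v x : V3) : Psi v *ᵥ x = ((Qd v)⁻¹ * (v ⬝ᵥ x)) • v := by
  funext i
  show ∑ j, (Qd v)⁻¹ * (v i * v j) * x j = ((Qd v)⁻¹ * (v ⬝ᵥ x)) * v i
  have : ∀ j, (Qd v)⁻¹ * (v i * v j) * x j = ((Qd v)⁻¹ * v i) * (v j * x j) := fun j => by ring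
  rw [Finset.sum_congr rfl fun j _ => this j, ← Finset.mul_sum]
  show (Qd v)⁻¹ * v i * (v ⬝ᵥ x) = _
  ring

lemma Psi_mulVec_self {v : V3} (hv : v ≠ 0) : Psi v *ᵥ v = v := by
  rw [Psi_mulVec]
  have : v ⬝ᵥ v = Qd v := rfl
  rw [this, inv_mul_cancel₀ (Qd_pos hv).ne', one_smul]

lemma Phi_inj {p q : RP2} (h : Phi p = Phi q) : p = q := by
  revert h
  refine RP2.ind (P := fun p => Phi p = Phi q → p = q) (fun v hv => ?_) p
  refine RP2.ind (P := fun q => Phi (RP2.mk v hv) = Phi q → RP2.mk v hv = q) (fun w hw => ?_) q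
  intro h
  rw [Phi_mk, Phi_mk] at h
  have h1 : w = ((Qd v)⁻¹ * (v ⬝ᵥ w)) • v := by
    conv_lhs => rw [← Psi_mulVec_self hw, ← h, Psi_mulVec]
  refine RP2.mk_eq_mk_iff.2 ⟨_, ?_, h1⟩
  intro h0
  exact hw (by rw [h1, h0, zero_smul])

lemma tendsto_RP2mk {c : ℕ → V3} {v : V3} (hc : ∀ k, c k ≠ 0) (hv : v ≠ 0)
    (h : Tendsto c atTop (𝓝 v)) :
    Tendsto (fun k => RP2.mk (c k) (hc k)) atTop (𝓝 (RP2.mk v hv)) := by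
  have h1 : Tendsto (fun k => (⟨c k, hc k⟩ : {v : V3 // v ≠ 0})) atTop (𝓝 ⟨v, hv⟩) :=
    tendsto_subtype_rng.2 h
  exact ((continuous_quotient_mk').tendsto _).comp h1

lemma RP2.mk_eq_mk' {v : V3} (hv : v ≠ 0) : RP2.mk v hv = RP2.mk' v := (dif_neg hv).symm

lemma Phi_mk' {v : V3} (hv : v ≠ 0) : Phi (RP2.mk' v) = Psi v := by
  rw [← RP2.mk_eq_mk' hv, Phi_mk]

lemma mk'_smul {c : ℝ} (hc : c ≠ 0) (v : V3) : RP2.mk' (c • v) = RP2.mk' v := by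
  rcases eq_or_ne v 0 with h | h
  · rw [h, smul_zero]
  · rw [← RP2.mk_eq_mk' (smul_ne_zero hc h), ← RP2.mk_eq_mk' h]
    exact (RP2.mk_eq_mk_iff.2 ⟨c, hc, rfl⟩).symm

lemma RP2_unique_limit {c : ℕ → V3} {v : V3} (hv : v ≠ 0) {y : RP2}
    (hcv : Tendsto c atTop (𝓝 v))
    (hy : Tendsto (fun k => RP2.mk' (c k)) atTop (𝓝 y)) : y = RP2.mk v hv := by
  have hne : ∀ᶠ k in atTop, c k ≠ 0 := hcv.eventually_ne hv
  have h1 : Tendsto (fun k => Phi (RP2.mk' (c k))) atTop (𝓝 (Phi y)) :=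
    (continuous_Phi.tendsto y).comp hy
  have h2 : Tendsto (fun k => Phi (RP2.mk' (c k))) atTop (𝓝 (Psi v)) := by
    refine Tendsto.congr' ?_ ((continuousAt_Psi hv).tendsto.comp hcv)
    filter_upwards [hne] with k hk
    exact (Phi_mk' hk).symm
  apply Phi_inj
  rw [Phi_mk, tendsto_nhds_unique h1 h2]

lemma exists_lift {u : ℕ → RP2} {v : V3} (hv : v ≠ 0)
    (h : Tendsto u atTop (𝓝 (RP2.mk v hv))) :
    ∃ w : ℕ → V3, Tendsto w atTop (𝓝 v) ∧
      ∀ᶠ k in atTop, w k ≠ 0 ∧ RP2.mk' (w k) = u k := by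
  have hcont : Continuous fun M : Matrix (Fin 3) (Fin 3) ℝ => M *ᵥ v := by
    refine continuous_pi fun i => ?_
    show Continuous fun M : Matrix (Fin 3) (Fin 3) ℝ => ∑ j, M i j * v j
    exact continuous_finset_sum _ fun j _ =>
      (Continuous.matrix_elem continuous_id i j).mul continuous_const
  refine ⟨fun k => Phi (u k) *ᵥ v, ?_, ?_⟩
  · have h1 : Tendsto (fun k => Phi (u k)) atTop (𝓝 (Phi (RP2.mk v hv))) :=
      (continuous_Phi.tendsto _).comp h
    have h2 := (hcont.tendsto _).comp h1
    rw [Phi_mk, Psi_mulVec_self hv] at h2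
    exact h2
  · have hwt : Tendsto (fun k => Phi (u k) *ᵥ v) atTop (𝓝 v) := by
      have h1 : Tendsto (fun k => Phi (u k)) atTop (𝓝 (Phi (RP2.mk v hv))) :=
        (continuous_Phi.tendsto _).comp h
      have h2 := (hcont.tendsto _).comp h1
      rw [Phi_mk, Psi_mulVec_self hv] at h2
      exact h2
    filter_upwards [hwt.eventually_ne hv] with k hk
    refine ⟨hk, ?_⟩
    obtain ⟨z, hz⟩ : ∃ z : {x : V3 // x ≠ 0}, u k = Quotient.mk projSetoid z :=
      ⟨Quotient.out (u k), (Quotient.out_eq _).symm⟩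
    have hwk : Phi (u k) *ᵥ v = ((Qd z.1)⁻¹ * (z.1 ⬝ᵥ v)) • z.1 := by
      rw [hz]
      exact Psi_mulVec z.1 v
    have hc : (Qd z.1)⁻¹ * (z.1 ⬝ᵥ v) ≠ 0 := fun h0 => hk (by rw [hwk, h0, zero_smul])
    rw [← RP2.mk_eq_mk' hk]
    conv_rhs => rw [hz]
    have hr : projSetoid.r z ⟨Phi (u k) *ᵥ v, hk⟩ := ⟨_, hc, hwk⟩
    exact (Quotient.sound hr).symm

lemma exists_line_form {y : RP2} (h : Phi y 2 2 = 0) :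
    ∃ (s t : ℝ) (h : (![s, t, 0] : V3) ≠ 0), y = RP2.mk ![s, t, 0] h := by
  obtain ⟨z, hz⟩ : ∃ z : {x : V3 // x ≠ 0}, y = Quotient.mk projSetoid z :=
    ⟨Quotient.out y, (Quotient.out_eq _).symm⟩
  have h22 : z.1 2 = 0 := by
    have he : Phi y 2 2 = (Qd z.1)⁻¹ * (z.1 2 * z.1 2) := by rw [hz]; rfl
    rw [he] at h
    rcases mul_eq_zero.1 h with h' | h'
    · exact absurd h' (inv_ne_zero (Qd_pos z.2).ne')
    · exact mul_self_eq_zero.1 h'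
  have hvec : z.1 = ![z.1 0, z.1 1, 0] := by
    funext i
    fin_cases i
    · rfl
    · rfl
    · exact h22
  refine ⟨z.1 0, z.1 1, by rw [← hvec]; exact z.2, ?_⟩
  rw [hz]
  exact congrArg (Quotient.mk projSetoid) (Subtype.ext hvec)

end Aux

/-- Lemma 2.9 (balanced dynamics on the projective plane, diagonal case). -/
theorem balanced_rp2_dynamics
    (β γ : ℕ → ℝ) (hpos : ∀ n, 0 < γ n ∧ γ n ≤ β n ∧ β n ≤ 1)
    (hβ : Filter.Tendsto β Filter.atTop (nhds 0))
    (hratio : Filter.Tendsto (fun n => γ n / β n) Filter.atTop (nhds 0))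
    (A : ℕ → GL3)
    (hA : ∀ n, (A n : Matrix (Fin 3) (Fin 3) ℝ) = Matrix.diagonal ![1, β n, γ n]) :
    (∀ (v : V3) (hv : v ≠ 0), v 0 ≠ 0 →
      DynSet (fun n => RP2.mapMat (A n)) (RP2.mk v hv) = {RP2.mk ![1, 0, 0] e1_ne}) ∧
    (∀ (v : V3) (hv : v ≠ 0), v 0 = 0 → v 1 ≠ 0 →
      DynSet (fun n => RP2.mapMat (A n)) (RP2.mk v hv) =
        {q : RP2 | ∃ (s t : ℝ) (h : (![s, t, 0] : V3) ≠ 0), q = RP2.mk ![s, t, 0] h}) ∧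
    DynSet (fun n => RP2.mapMat (A n)) (RP2.mk ![0, 0, 1] e3_ne) = Set.univ := by
  have hβpos : ∀ n, 0 < β n := fun n => lt_of_lt_of_le (hpos n).1 (hpos n).2.1
  have hβ0 : ∀ n, β n ≠ 0 := fun n => (hβpos n).ne'
  have hγpos : ∀ n, 0 < γ n := fun n => (hpos n).1
  have hγ0 : ∀ n, γ n ≠ 0 := fun n => (hγpos n).ne'
  have hγ : Tendsto γ atTop (𝓝 0) :=
    tendsto_of_tendsto_of_tendsto_of_le_of_le tendsto_const_nhds hβ
      (fun n => (hγpos n).le) (fun n => (hpos n).2.1)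
  have hmul : ∀ (n) (w : V3), (A n : Matrix (Fin 3) (Fin 3) ℝ) *ᵥ w
      = ![w 0, β n * w 1, γ n * w 2] := by
    intro n w
    rw [hA n]
    funext i
    fin_cases i <;> simp [Matrix.mulVec_diagonal]
  have hmap : ∀ (n) (w : V3) (hw : w ≠ 0),
      RP2.mapMat (A n) (RP2.mk w hw) = RP2.mk' ![w 0, β n * w 1, γ n * w 2] := by
    intro n w hw
    rw [RP2.mapMat_mk, RP2.mk_eq_mk', hmul n w]
  refine ⟨?_, ?_, ?_⟩
  · -- Part 1
    intro v hv hv0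
    apply Set.eq_singleton_iff_unique_mem.2
    constructor
    · -- [e₁] belongs to the dynamic set
      refine ⟨id, strictMono_id, fun _ => RP2.mk v hv, tendsto_const_nhds, ?_⟩
      have hmne : ∀ k, (![(1:ℝ), β k * (v 1 / v 0), γ k * (v 2 / v 0)] : V3) ≠ 0 :=
        fun k => ne_zero_of_coord 0 (by norm_num)
      have key : ∀ k, RP2.mapMat (A k) (RP2.mk v hv)
          = RP2.mk ![1, β k * (v 1 / v 0), γ k * (v 2 / v 0)] (hmne k) := by
        intro k
        rw [hmap k v hv]
        have hsm : (![v 0, β k * v 1, γ k * v 2] : V3)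
            = v 0 • ![1, β k * (v 1 / v 0), γ k * (v 2 / v 0)] := by
          funext i
          fin_cases i <;> simp [Pi.smul_apply, smul_eq_mul] <;> (try field_simp) <;> (try ring)
        rw [hsm, mk'_smul hv0, ← RP2.mk_eq_mk' (hmne k)]
      have hlim : Tendsto (fun k => (![(1:ℝ), β k * (v 1 / v 0), γ k * (v 2 / v 0)] : V3))
          atTop (𝓝 ![1, 0, 0]) := by
        rw [tendsto_pi_nhds]
        intro i
        fin_cases i
        · simpa using tendsto_const_nhds
        · simpa using hβ.mul_const (v 1 / v 0)
        · simpa using hγ.mul_const (v 2 / v 0)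
      exact (tendsto_RP2mk hmne e1_ne hlim).congr fun k => (key k).symm
    · -- uniqueness of the limit
      rintro y ⟨φ, hφ, u, hu, hgu⟩
      obtain ⟨w, hwt, hev⟩ := exists_lift hv hu
      have hw0 : Tendsto (fun k => w k 0) atTop (𝓝 (v 0)) := tendsto_pi_nhds.1 hwt 0
      have hw1 : Tendsto (fun k => w k 1) atTop (𝓝 (v 1)) := tendsto_pi_nhds.1 hwt 1
      have hw2 : Tendsto (fun k => w k 2) atTop (𝓝 (v 2)) := tendsto_pi_nhds.1 hwt 2
      have hev0 : ∀ᶠ k in atTop, w k 0 ≠ 0 := hw0.eventually_ne hv0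
      have heq : ∀ᶠ k in atTop, RP2.mapMat (A (φ k)) (u k)
          = RP2.mk' ![1, β (φ k) * (w k 1 / w k 0), γ (φ k) * (w k 2 / w k 0)] := by
        filter_upwards [hev, hev0] with k hk hk0
        obtain ⟨hkne, hkrep⟩ := hk
        rw [← hkrep, ← RP2.mk_eq_mk' hkne, hmap (φ k) (w k) hkne]
        have hsm : (![w k 0, β (φ k) * w k 1, γ (φ k) * w k 2] : V3)
            = w k 0 • ![1, β (φ k) * (w k 1 / w k 0), γ (φ k) * (w k 2 / w k 0)] := by
          funext i
          fin_cases i <;> simp [Pi.smul_apply, smul_eq_mul] <;> (try field_simp) <;> (try ring)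
        rw [hsm, mk'_smul hk0]
      have hy : Tendsto
          (fun k => RP2.mk' ![1, β (φ k) * (w k 1 / w k 0), γ (φ k) * (w k 2 / w k 0)])
          atTop (𝓝 y) := Tendsto.congr' heq hgu
      have hβφ : Tendsto (fun k => β (φ k)) atTop (𝓝 0) := hβ.comp hφ.tendsto_atTop
      have hγφ : Tendsto (fun k => γ (φ k)) atTop (𝓝 0) := hγ.comp hφ.tendsto_atTop
      have hlim : Tendsto
          (fun k => (![(1:ℝ), β (φ k) * (w k 1 / w k 0), γ (φ k) * (w k 2 / w k 0)] : V3))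
          atTop (𝓝 ![1, 0, 0]) := by
        rw [tendsto_pi_nhds]
        intro i
        fin_cases i
        · simpa using tendsto_const_nhds
        · simpa using hβφ.mul (hw1.div hw0 hv0)
        · simpa using hγφ.mul (hw2.div hw0 hv0)
      exact RP2_unique_limit e1_ne hlim hy
  · -- Part 2
    intro v hv hv0 hv1
    ext y
    simp only [Set.mem_setOf_eq]
    constructor
    · -- upper bound
      rintro ⟨φ, hφ, u, hu, hgu⟩
      obtain ⟨w, hwt, hev⟩ := exists_lift hv hu
      have hw1 : Tendsto (fun k => w k 1) atTop (𝓝 (v 1)) := tendsto_pi_nhds.1 hwt 1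
      have hw2 : Tendsto (fun k => w k 2) atTop (𝓝 (v 2)) := tendsto_pi_nhds.1 hwt 2
      have hev1 : ∀ᶠ k in atTop, w k 1 ≠ 0 := hw1.eventually_ne hv1
      set c : ℕ → V3 := fun k => ![w k 0, β (φ k) * w k 1, γ (φ k) * w k 2] with hc
      have hcne : ∀ᶠ k in atTop, c k ≠ 0 := by
        filter_upwards [hev1] with k hk1
        exact ne_zero_of_coord 1 (by simpa [hc] using mul_ne_zero (hβ0 (φ k)) hk1)
      have heq : ∀ᶠ k in atTop, RP2.mapMat (A (φ k)) (u k) = RP2.mk' (c k) := by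
        filter_upwards [hev] with k hk
        obtain ⟨hkne, hkrep⟩ := hk
        rw [← hkrep, ← RP2.mk_eq_mk' hkne, hmap (φ k) (w k) hkne]
      have hy : Tendsto (fun k => RP2.mk' (c k)) atTop (𝓝 y) := Tendsto.congr' heq hgu
      have hPsi : Tendsto (fun k => Psi (c k)) atTop (𝓝 (Phi y)) := by
        refine Tendsto.congr' ?_ ((continuous_Phi.tendsto y).comp hy)
        filter_upwards [hcne] with k hk
        exact Phi_mk' hk
      have hent : Tendsto (fun k => Psi (c k) 2 2) atTop (𝓝 (Phi y 2 2)) := by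
        have hco : Continuous fun M : Matrix (Fin 3) (Fin 3) ℝ => M 2 2 :=
          (continuous_apply (2 : Fin 3)).comp (continuous_apply (2 : Fin 3))
        exact (hco.tendsto _).comp hPsi
      have hzero : Tendsto (fun k => Psi (c k) 2 2) atTop (𝓝 0) := by
        have h1 : Tendsto (fun k => γ (φ k) / β (φ k) * (w k 2 / w k 1)) atTop (𝓝 0) := by
          simpa using (hratio.comp hφ.tendsto_atTop).mul (hw2.div hw1 hv1)
        have hg : Tendsto (fun k => γ (φ k) / β (φ k) * (w k 2 / w k 1)
            * (γ (φ k) / β (φ k) * (w k 2 / w k 1))) atTop (𝓝 0) := by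
          simpa using h1.mul h1
        refine tendsto_of_tendsto_of_tendsto_of_le_of_le' tendsto_const_nhds hg
          (Eventually.of_forall fun k => ?_) ?_
        · show (0:ℝ) ≤ Psi (c k) 2 2
          rw [Psi_apply]
          exact mul_nonneg (inv_nonneg.2 (Qd_nonneg _)) (mul_self_nonneg _)
        filter_upwards [hev1] with k hk1
        have hc1 : c k 1 = β (φ k) * w k 1 := rfl
        have hc2 : c k 2 = γ (φ k) * w k 2 := rfl
        have hpos1 : 0 < c k 1 * c k 1 :=
          mul_self_pos.2 (by rw [hc1]; exact mul_ne_zero (hβ0 _) hk1)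
        have hQ : c k 1 * c k 1 ≤ Qd (c k) := by
          rw [Qd_eq]
          exact Finset.single_le_sum (f := fun j => c k j * c k j)
            (fun j _ => mul_self_nonneg _) (Finset.mem_univ (1 : Fin 3))
        have hb : (Qd (c k))⁻¹ * (c k 2 * c k 2) ≤ (c k 1 * c k 1)⁻¹ * (c k 2 * c k 2) :=
          mul_le_mul_of_nonneg_right (inv_anti₀ hpos1 hQ) (mul_self_nonneg _)
        calc Psi (c k) 2 2 = (Qd (c k))⁻¹ * (c k 2 * c k 2) := Psi_apply _ _ _
          _ ≤ (c k 1 * c k 1)⁻¹ * (c k 2 * c k 2) := hb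
          _ = γ (φ k) / β (φ k) * (w k 2 / w k 1)
              * (γ (φ k) / β (φ k) * (w k 2 / w k 1)) := by
              rw [hc1, hc2]
              field_simp
      exact exists_line_form (tendsto_nhds_unique hent hzero)
    · -- lower bound: every point of the line arises
      rintro ⟨s, t, hst, rfl⟩
      have hv' : (![(0:ℝ), v 1, v 2] : V3) ≠ 0 := ne_zero_of_coord 1 (by simpa using hv1)
      have hmkv : RP2.mk v hv = RP2.mk ![0, v 1, v 2] hv' :=
        RP2.mk_eq_mk_iff.2 ⟨1, one_ne_zero, by
          funext i; fin_cases i <;> simp [hv0]⟩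
      rcases eq_or_ne t 0 with ht | ht
      · -- t = 0, so the target is [e₁]
        subst ht
        have hs : s ≠ 0 := by
          intro h0
          apply hst
          subst h0
          funext i; fin_cases i <;> simp
        set σ : ℕ → ℝ := fun n => Real.sqrt (β n) with hσdef
        have hσpos : ∀ n, 0 < σ n := fun n => Real.sqrt_pos.2 (hβpos n)
        have hσ0 : Tendsto σ atTop (𝓝 0) := by
          have := (Real.continuous_sqrt.tendsto 0).comp hβ
          simpa [hσdef, Function.comp_def] using this
        have hσσ : ∀ n, σ n * σ n = β n := fun n => Real.mul_self_sqrt (hβpos n).le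
        have huk : ∀ k, (![σ k * v 1, v 1, v 2] : V3) ≠ 0 :=
          fun k => ne_zero_of_coord 1 (by simpa using hv1)
        refine ⟨id, strictMono_id, fun k => RP2.mk ![σ k * v 1, v 1, v 2] (huk k), ?_, ?_⟩
        · refine hmkv ▸ tendsto_RP2mk huk hv' ?_
          rw [tendsto_pi_nhds]
          intro i
          fin_cases i
          · simpa using hσ0.mul_const (v 1)
          · simpa using (tendsto_const_nhds : Tendsto (fun _ : ℕ => v 1) atTop _)
          · simpa using (tendsto_const_nhds : Tendsto (fun _ : ℕ => v 2) atTop _)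
        · have hmm : ∀ k, (![(1:ℝ), σ k, γ k / σ k * (v 2 / v 1)] : V3) ≠ 0 :=
            fun k => ne_zero_of_coord 0 (by norm_num)
          have key : ∀ k, RP2.mapMat (A k) (RP2.mk ![σ k * v 1, v 1, v 2] (huk k))
              = RP2.mk ![1, σ k, γ k / σ k * (v 2 / v 1)] (hmm k) := by
            intro k
            rw [hmap]
            have e0 : (![σ k * v 1, v 1, v 2] : V3) 0 = σ k * v 1 := rfl
            have e1 : (![σ k * v 1, v 1, v 2] : V3) 1 = v 1 := rfl
            have e2 : (![σ k * v 1, v 1, v 2] : V3) 2 = v 2 := rfl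
            rw [e0, e1, e2]
            have hsm : (![σ k * v 1, β k * v 1, γ k * v 2] : V3)
                = (σ k * v 1) • ![1, σ k, γ k / σ k * (v 2 / v 1)] := by
              funext i
              fin_cases i <;> simp [Pi.smul_apply, smul_eq_mul, ← hσσ k] <;>
                (try field_simp [(hσpos k).ne', hv1]) <;> (try ring)
            rw [hsm, mk'_smul (mul_ne_zero (hσpos k).ne' hv1), ← RP2.mk_eq_mk' (hmm k)]
          have hγσ : Tendsto (fun k => γ k / σ k) atTop (𝓝 0) :=
            tendsto_of_tendsto_of_tendsto_of_le_of_le tendsto_const_nhds hσ0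
              (fun k => div_nonneg (hγpos k).le (hσpos k).le)
              (fun k => (div_le_iff₀ (hσpos k)).2 (by rw [hσσ]; exact (hpos k).2.1))
          have hlim : Tendsto (fun k => (![(1:ℝ), σ k, γ k / σ k * (v 2 / v 1)] : V3))
              atTop (𝓝 ![1, 0, 0]) := by
            rw [tendsto_pi_nhds]
            intro i
            fin_cases i
            · simpa using tendsto_const_nhds
            · simpa using hσ0
            · simpa using hγσ.mul_const (v 2 / v 1)
          have htarget : RP2.mk ![s, (0:ℝ), 0] hst = RP2.mk ![(1:ℝ), 0, 0] e1_ne := by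
            refine RP2.mk_eq_mk_iff.2 ⟨s⁻¹, inv_ne_zero hs, ?_⟩
            funext i
            fin_cases i <;> simp [Pi.smul_apply, smul_eq_mul, inv_mul_cancel₀ hs]
          rw [htarget]
          exact (tendsto_RP2mk hmm e1_ne hlim).congr fun k => (key k).symm
      · -- t ≠ 0
        have huk : ∀ k, (![β k * (s * v 1 / t), v 1, v 2] : V3) ≠ 0 :=
          fun k => ne_zero_of_coord 1 (by simpa using hv1)
        have hmm : ∀ k, (![s, t, γ k / β k * (t * v 2 / v 1)] : V3) ≠ 0 :=
          fun k => ne_zero_of_coord 1 (by simpa using ht)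
        refine ⟨id, strictMono_id,
          fun k => RP2.mk ![β k * (s * v 1 / t), v 1, v 2] (huk k), ?_, ?_⟩
        · refine hmkv ▸ tendsto_RP2mk huk hv' ?_
          rw [tendsto_pi_nhds]
          intro i
          fin_cases i
          · simpa using hβ.mul_const (s * v 1 / t)
          · simpa using (tendsto_const_nhds : Tendsto (fun _ : ℕ => v 1) atTop _)
          · simpa using (tendsto_const_nhds : Tendsto (fun _ : ℕ => v 2) atTop _)
        · have key : ∀ k, RP2.mapMat (A k) (RP2.mk ![β k * (s * v 1 / t), v 1, v 2] (huk k))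
              = RP2.mk ![s, t, γ k / β k * (t * v 2 / v 1)] (hmm k) := by
            intro k
            rw [hmap]
            have e0 : (![β k * (s * v 1 / t), v 1, v 2] : V3) 0 = β k * (s * v 1 / t) := rfl
            have e1 : (![β k * (s * v 1 / t), v 1, v 2] : V3) 1 = v 1 := rfl
            have e2 : (![β k * (s * v 1 / t), v 1, v 2] : V3) 2 = v 2 := rfl
            rw [e0, e1, e2]
            have hsm : (![β k * (s * v 1 / t), β k * v 1, γ k * v 2] : V3)
                = (β k * v 1 / t) • ![s, t, γ k / β k * (t * v 2 / v 1)] := by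
              funext i
              fin_cases i <;> simp [Pi.smul_apply, smul_eq_mul] <;>
                (try field_simp [hβ0 k, hv1, ht]) <;> (try ring)
            rw [hsm, mk'_smul (div_ne_zero (mul_ne_zero (hβ0 k) hv1) ht),
              ← RP2.mk_eq_mk' (hmm k)]
          have hlim : Tendsto (fun k => (![s, t, γ k / β k * (t * v 2 / v 1)] : V3))
              atTop (𝓝 ![s, t, 0]) := by
            rw [tendsto_pi_nhds]
            intro i
            fin_cases i
            · simpa using (tendsto_const_nhds : Tendsto (fun _ : ℕ => s) atTop _)
            · simpa using (tendsto_const_nhds : Tendsto (fun _ : ℕ => t) atTop _)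
            · simpa using hratio.mul_const (t * v 2 / v 1)
          exact (tendsto_RP2mk hmm hst hlim).congr fun k => (key k).symm
  · -- Part 3
    apply Set.eq_univ_of_forall
    intro y
    refine RP2.ind (fun r hr => ?_) y
    rcases eq_or_ne (r 2) 0 with h2 | h2
    · rcases eq_or_ne (r 1) 0 with h1 | h1
      · -- r 1 = r 2 = 0, r 0 ≠ 0
        have h0 : r 0 ≠ 0 := by
          intro h0
          apply hr
          funext i
          fin_cases i <;> simp [h0, h1, h2]
        set τ : ℕ → ℝ := fun n => Real.sqrt (γ n) with hτdef
        have hτpos : ∀ n, 0 < τ n := fun n => Real.sqrt_pos.2 (hγpos n)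
        have hτ0 : Tendsto τ atTop (𝓝 0) := by
          have := (Real.continuous_sqrt.tendsto 0).comp hγ
          simpa [hτdef, Function.comp_def] using this
        have hττ : ∀ n, τ n * τ n = γ n := fun n => Real.mul_self_sqrt (hγpos n).le
        have huk : ∀ k, (![τ k, (0:ℝ), 1] : V3) ≠ 0 :=
          fun k => ne_zero_of_coord 2 (by simp)
        have hmm : ∀ k, (![(1:ℝ), 0, τ k] : V3) ≠ 0 :=
          fun k => ne_zero_of_coord 0 (by norm_num)
        refine ⟨id, strictMono_id, fun k => RP2.mk ![τ k, 0, 1] (huk k), ?_, ?_⟩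
        · refine tendsto_RP2mk huk e3_ne ?_
          rw [tendsto_pi_nhds]
          intro i
          fin_cases i
          · simpa using hτ0
          · simpa using (tendsto_const_nhds : Tendsto (fun _ : ℕ => (0:ℝ)) atTop _)
          · simpa using (tendsto_const_nhds : Tendsto (fun _ : ℕ => (1:ℝ)) atTop _)
        · have key : ∀ k, RP2.mapMat (A k) (RP2.mk ![τ k, 0, 1] (huk k))
              = RP2.mk ![1, 0, τ k] (hmm k) := by
            intro k
            rw [hmap]
            have e0 : (![τ k, (0:ℝ), 1] : V3) 0 = τ k := rfl
            have e1 : (![τ k, (0:ℝ), 1] : V3) 1 = 0 := rfl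
            have e2 : (![τ k, (0:ℝ), 1] : V3) 2 = 1 := rfl
            rw [e0, e1, e2]
            have hsm : (![τ k, β k * 0, γ k * 1] : V3) = τ k • ![1, 0, τ k] := by
              funext i
              fin_cases i <;> simp [Pi.smul_apply, smul_eq_mul, ← hττ k]
            rw [hsm, mk'_smul (hτpos k).ne', ← RP2.mk_eq_mk' (hmm k)]
          have htarget : RP2.mk r hr = RP2.mk ![(1:ℝ), 0, 0] e1_ne := by
            refine RP2.mk_eq_mk_iff.2 ⟨(r 0)⁻¹, inv_ne_zero h0, ?_⟩
            funext i
            fin_cases i <;>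
              simp [Pi.smul_apply, smul_eq_mul, inv_mul_cancel₀ h0, h1, h2]
          have hlim : Tendsto (fun k => (![(1:ℝ), 0, τ k] : V3)) atTop (𝓝 ![1, 0, 0]) := by
            rw [tendsto_pi_nhds]
            intro i
            fin_cases i
            · simpa using (tendsto_const_nhds : Tendsto (fun _ : ℕ => (1:ℝ)) atTop _)
            · simpa using (tendsto_const_nhds : Tendsto (fun _ : ℕ => (0:ℝ)) atTop _)
            · simpa using hτ0
          rw [htarget]
          exact (tendsto_RP2mk hmm e1_ne hlim).congr fun k => (key k).symm
      · -- r 2 = 0, r 1 ≠ 0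
        set ρ : ℕ → ℝ := fun n => Real.sqrt (γ n / β n) with hρdef
        have hρpos : ∀ n, 0 < ρ n := fun n => Real.sqrt_pos.2 (div_pos (hγpos n) (hβpos n))
        have hρ0 : Tendsto ρ atTop (𝓝 0) := by
          have := (Real.continuous_sqrt.tendsto 0).comp hratio
          simpa [hρdef, Function.comp_def] using this
        have hρρ : ∀ n, ρ n * ρ n = γ n / β n :=
          fun n => Real.mul_self_sqrt (div_pos (hγpos n) (hβpos n)).le
        have huk : ∀ k, (![β k * ρ k * (r 0 / r 1), ρ k, 1] : V3) ≠ 0 :=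
          fun k => ne_zero_of_coord 2 (by simp)
        have hmm : ∀ k, (![r 0 / r 1, (1:ℝ), ρ k] : V3) ≠ 0 :=
          fun k => ne_zero_of_coord 1 (by norm_num)
        refine ⟨id, strictMono_id,
          fun k => RP2.mk ![β k * ρ k * (r 0 / r 1), ρ k, 1] (huk k), ?_, ?_⟩
        · refine tendsto_RP2mk huk e3_ne ?_
          rw [tendsto_pi_nhds]
          intro i
          fin_cases i
          · simpa using (hβ.mul hρ0).mul_const (r 0 / r 1)
          · simpa using hρ0
          · simpa using (tendsto_const_nhds : Tendsto (fun _ : ℕ => (1:ℝ)) atTop _)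
        · have key : ∀ k, RP2.mapMat (A k)
              (RP2.mk ![β k * ρ k * (r 0 / r 1), ρ k, 1] (huk k))
              = RP2.mk ![r 0 / r 1, 1, ρ k] (hmm k) := by
            intro k
            rw [hmap]
            have e0 : (![β k * ρ k * (r 0 / r 1), ρ k, 1] : V3) 0
                = β k * ρ k * (r 0 / r 1) := rfl
            have e1 : (![β k * ρ k * (r 0 / r 1), ρ k, 1] : V3) 1 = ρ k := rfl
            have e2 : (![β k * ρ k * (r 0 / r 1), ρ k, 1] : V3) 2 = 1 := rfl
            rw [e0, e1, e2]
            have hsm : (![β k * ρ k * (r 0 / r 1), β k * ρ k, γ k * 1] : V3)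
                = (β k * ρ k) • ![r 0 / r 1, 1, ρ k] := by
              have hgk : β k * ρ k * ρ k = γ k := by
                rw [mul_assoc, hρρ k, mul_comm, div_mul_cancel₀ _ (hβ0 k)]
              funext i
              fin_cases i <;> simp [Pi.smul_apply, smul_eq_mul, hgk] <;>
                (try field_simp) <;> (try ring)
            rw [hsm, mk'_smul (mul_ne_zero (hβ0 k) (hρpos k).ne'),
              ← RP2.mk_eq_mk' (hmm k)]
          have htarget : RP2.mk r hr = RP2.mk ![r 0 / r 1, (1:ℝ), 0] (by
              exact ne_zero_of_coord 1 (by norm_num)) := by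
            refine RP2.mk_eq_mk_iff.2 ⟨(r 1)⁻¹, inv_ne_zero h1, ?_⟩
            funext i
            fin_cases i <;>
              simp [Pi.smul_apply, smul_eq_mul, inv_mul_cancel₀ h1, h2, div_eq_inv_mul, mul_comm]
          have hlim : Tendsto (fun k => (![r 0 / r 1, (1:ℝ), ρ k] : V3))
              atTop (𝓝 ![r 0 / r 1, 1, 0]) := by
            rw [tendsto_pi_nhds]
            intro i
            fin_cases i
            · simpa using (tendsto_const_nhds : Tendsto (fun _ : ℕ => r 0 / r 1) atTop _)
            · simpa using (tendsto_const_nhds : Tendsto (fun _ : ℕ => (1:ℝ)) atTop _)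
            · simpa using hρ0
          rw [htarget]
          exact (tendsto_RP2mk hmm _ hlim).congr fun k => (key k).symm
    · -- r 2 ≠ 0
      have huk : ∀ k, (![γ k * (r 0 / r 2), γ k / β k * (r 1 / r 2), 1] : V3) ≠ 0 :=
        fun k => ne_zero_of_coord 2 (by simp)
      refine ⟨id, strictMono_id,
        fun k => RP2.mk ![γ k * (r 0 / r 2), γ k / β k * (r 1 / r 2), 1] (huk k), ?_, ?_⟩
      · refine tendsto_RP2mk huk e3_ne ?_
        rw [tendsto_pi_nhds]
        intro i
        fin_cases i
        · simpa using hγ.mul_const (r 0 / r 2)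
        · simpa using hratio.mul_const (r 1 / r 2)
        · simpa using (tendsto_const_nhds : Tendsto (fun _ : ℕ => (1:ℝ)) atTop _)
      · have key : ∀ k, RP2.mapMat (A k)
            (RP2.mk ![γ k * (r 0 / r 2), γ k / β k * (r 1 / r 2), 1] (huk k))
            = RP2.mk r hr := by
          intro k
          rw [hmap]
          have e0 : (![γ k * (r 0 / r 2), γ k / β k * (r 1 / r 2), 1] : V3) 0
              = γ k * (r 0 / r 2) := rfl
          have e1 : (![γ k * (r 0 / r 2), γ k / β k * (r 1 / r 2), 1] : V3) 1
              = γ k / β k * (r 1 / r 2) := rfl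
          have e2 : (![γ k * (r 0 / r 2), γ k / β k * (r 1 / r 2), 1] : V3) 2 = 1 := rfl
          rw [e0, e1, e2]
          have hsm : (![γ k * (r 0 / r 2), β k * (γ k / β k * (r 1 / r 2)), γ k * 1] : V3)
              = (γ k / r 2) • r := by
            funext i
            fin_cases i <;> simp [Pi.smul_apply, smul_eq_mul] <;>
              (try field_simp [hβ0 k, hγ0 k, h2]) <;> (try ring)
          rw [hsm, mk'_smul (div_ne_zero (hγ0 k) h2), ← RP2.mk_eq_mk' hr]
        exact Tendsto.congr (fun k => (key k).symm) tendsto_const_nhds
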